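/- Fix k ≥ 0 and define ϑ_r(x;y) = ∑_{i≥0} q_{r-i}(x) e_i(y) where y = (y_1,...,y_k). Then ∑_{i+j=r} (-1)^i ϑ_i ϑ_j equals 0 if r is odd, and equals (-1)^{r/2} e_{r/2}(y_1^2,...,y_k^2) if r is even. -/

import Mathlib

/-- The value of the elementary symmetric polynomial `e_i(y)` in `k` variables
(it vanishes for `i > k`). -/
def esymmVal {R : Type*} [CommRing R] {k : ℕ} (y : Fin k → R) (i : ℕ) : R :=
  ∑ s ∈ Finset.powersetCard i (Finset.univ : Finset (Fin k)), ∏ j ∈ s, y j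

/-- `ϑ_r(x;y) = ∑_i q_{r-i}(x) e_i(y)`, where `q_j` is the `j`-th coefficient of `Q`. -/
noncomputable def thetaNat {R : Type*} [CommRing R] {k : ℕ}
    (Q : PowerSeries R) (y : Fin k → R) (r : ℕ) : R :=
  ∑ i ∈ Finset.range (r + 1), PowerSeries.coeff (R := R) (r - i) Q * esymmVal y i

open Finset PowerSeries

lemma aux_rescale_C {R : Type*} [CommRing R] (a c : R) :
    rescale a (PowerSeries.C (R := R) c) = PowerSeries.C (R := R) c := by
  ext n
  simp only [coeff_rescale, PowerSeries.coeff_C]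
  rcases eq_or_ne n 0 with h | h <;> simp [h]

lemma aux_expand {R : Type*} [CommRing R] {k : ℕ} (a : Fin k → R) (d : ℕ) :
    (∏ j : Fin k, (1 + PowerSeries.C (R := R) (a j) * PowerSeries.X ^ d)) =
      ∑ t ∈ (Finset.univ : Finset (Fin k)).powerset,
        PowerSeries.C (R := R) (∏ i ∈ t, a i) * PowerSeries.X ^ (d * t.card) := by
  have h := Finset.prod_add (fun j : Fin k => PowerSeries.C (R := R) (a j) * PowerSeries.X ^ d)
    (fun _ => (1 : PowerSeries R)) Finset.univ
  simp only [Finset.prod_const_one, mul_one] at h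
  rw [show (∏ j : Fin k, (1 + PowerSeries.C (R := R) (a j) * PowerSeries.X ^ d)) =
      ∏ j : Fin k, (PowerSeries.C (R := R) (a j) * PowerSeries.X ^ d + 1) by
    exact Finset.prod_congr rfl fun j _ => add_comm _ _, h]
  refine Finset.sum_congr rfl fun t _ => ?_
  rw [Finset.prod_mul_distrib, Finset.prod_const, map_prod, ← pow_mul, mul_comm d t.card,
    mul_comm t.card d]

lemma aux_coeff {R : Type*} [CommRing R] {k : ℕ} (a : Fin k → R) (d r : ℕ) :
    PowerSeries.coeff (R := R) r (∏ j : Fin k, (1 + PowerSeries.C (R := R) (a j) * PowerSeries.X ^ d)) =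
      ∑ t ∈ (Finset.univ : Finset (Fin k)).powerset,
        if d * t.card = r then ∏ i ∈ t, a i else 0 := by
  rw [aux_expand, map_sum]
  refine Finset.sum_congr rfl fun t _ => ?_
  rw [PowerSeries.coeff_C_mul, PowerSeries.coeff_X_pow]
  by_cases h : d * t.card = r
  · simp [h]
  · simp [h, Ne.symm h]

lemma aux_coeff_esymm {R : Type*} [CommRing R] {k : ℕ} (a : Fin k → R) (r : ℕ) :
    PowerSeries.coeff (R := R) r (∏ j : Fin k, (1 + PowerSeries.C (R := R) (a j) * PowerSeries.X)) =
      esymmVal a r := by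
  have h := aux_coeff a 1 r
  simp only [pow_one, one_mul] at h
  rw [h, esymmVal, Finset.powersetCard_eq_filter, Finset.sum_filter]

lemma aux_theta_eq {R : Type*} [CommRing R] {k : ℕ} (Q : PowerSeries R) (y : Fin k → R)
    (r : ℕ) :
    thetaNat Q y r =
      PowerSeries.coeff (R := R) r ((∏ j : Fin k, (1 + PowerSeries.C (R := R) (y j) * PowerSeries.X)) * Q) := by
  rw [PowerSeries.coeff_mul, Finset.Nat.sum_antidiagonal_eq_sum_range_succ_mk, thetaNat]
  refine Finset.sum_congr rfl fun i _ => ?_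
  rw [aux_coeff_esymm, mul_comm]

/-- `∑_{i+j=r} (-1)^i ϑ_i ϑ_j` is `0` for odd `r` and
`(-1)^{r/2} e_{r/2}(y²)` for even `r`. -/
theorem stmt_1 {R : Type*} [CommRing R] (n k : ℕ) (x : Fin n → R) (y : Fin k → R)
    (Q : PowerSeries R)
    (hQ : Q * ∏ i : Fin n, (1 - PowerSeries.C (R := R) (x i) * PowerSeries.X) =
          ∏ i : Fin n, (1 + PowerSeries.C (R := R) (x i) * PowerSeries.X)) :
    (∀ r : ℕ, Odd r →
        ∑ i ∈ Finset.range (r + 1), (-1 : R) ^ i * thetaNat Q y i * thetaNat Q y (r - i) = 0) ∧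
    (∀ m : ℕ,
        ∑ i ∈ Finset.range (2 * m + 1), (-1 : R) ^ i * thetaNat Q y i * thetaNat Q y (2 * m - i)
          = (-1 : R) ^ m * esymmVal (fun j => y j ^ 2) m) := by
  classical
  set A : PowerSeries R := ∏ i : Fin n, (1 - PowerSeries.C (R := R) (x i) * PowerSeries.X) with hA
  set B : PowerSeries R := ∏ i : Fin n, (1 + PowerSeries.C (R := R) (x i) * PowerSeries.X) with hB
  set E : PowerSeries R := ∏ j : Fin k, (1 + PowerSeries.C (R := R) (y j) * PowerSeries.X) with hE
  set E' : PowerSeries R := ∏ j : Fin k, (1 - PowerSeries.C (R := R) (y j) * PowerSeries.X) with hE'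
  have hresA : rescale (-1 : R) A = B := by
    rw [hA, map_prod, hB]
    refine Finset.prod_congr rfl fun i _ => ?_
    rw [map_sub, map_one, map_mul, aux_rescale_C, rescale_neg_one_X]
    ring
  have hresB : rescale (-1 : R) B = A := by
    rw [hB, map_prod, hA]
    refine Finset.prod_congr rfl fun i _ => ?_
    rw [map_add, map_one, map_mul, aux_rescale_C, rescale_neg_one_X]
    ring
  have hresE : rescale (-1 : R) E = E' := by
    rw [hE, map_prod, hE']
    refine Finset.prod_congr rfl fun j _ => ?_
    rw [map_add, map_one, map_mul, aux_rescale_C, rescale_neg_one_X]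
    ring
  have h2 : rescale (-1 : R) Q * B = A := by
    have := congrArg (rescale (-1 : R)) hQ
    rwa [map_mul, hresA, hresB] at this
  have hUnit : IsUnit (A * B) := by
    rw [PowerSeries.isUnit_iff_constantCoeff]
    have : PowerSeries.constantCoeff (R := R) (A * B) = 1 := by
      rw [map_mul, hA, hB, map_prod, map_prod]
      simp
    rw [this]
    exact isUnit_one
  have hcancel : Q * rescale (-1 : R) Q = 1 := by
    refine hUnit.mul_right_cancel ?_
    calc Q * rescale (-1 : R) Q * (A * B) = (Q * A) * (rescale (-1 : R) Q * B) := by ring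
      _ = B * A := by rw [hQ, h2]
      _ = 1 * (A * B) := by ring
  have hkey : rescale (-1 : R) (E * Q) * (E * Q) =
      ∏ j : Fin k, (1 + PowerSeries.C (R := R) (-(y j ^ 2)) * PowerSeries.X ^ 2) := by
    rw [map_mul, hresE]
    calc E' * rescale (-1 : R) Q * (E * Q)
        = (E * E') * (Q * rescale (-1 : R) Q) := by ring
      _ = E * E' := by rw [hcancel, mul_one]
      _ = ∏ j : Fin k, ((1 + PowerSeries.C (R := R) (y j) * PowerSeries.X) *
            (1 - PowerSeries.C (R := R) (y j) * PowerSeries.X)) := by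
          rw [hE, hE', ← Finset.prod_mul_distrib]
      _ = _ := by
          refine Finset.prod_congr rfl fun j _ => ?_
          rw [map_neg, map_pow]
          ring
  have hmain : ∀ r : ℕ,
      ∑ i ∈ Finset.range (r + 1), (-1 : R) ^ i * thetaNat Q y i * thetaNat Q y (r - i) =
        ∑ t ∈ (Finset.univ : Finset (Fin k)).powerset,
          if 2 * t.card = r then ∏ i ∈ t, -(y i ^ 2) else 0 := by
    intro r
    rw [← aux_coeff, ← hkey, PowerSeries.coeff_mul,
      Finset.Nat.sum_antidiagonal_eq_sum_range_succ_mk]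
    refine Finset.sum_congr rfl fun i _ => ?_
    rw [coeff_rescale, ← aux_theta_eq, ← aux_theta_eq, mul_assoc]
  constructor
  · intro r hr
    rw [hmain]
    refine Finset.sum_eq_zero fun t _ => ?_
    rw [if_neg]
    intro h
    rcases hr with ⟨c, hc⟩
    omega
  · intro m
    rw [hmain]
    have hcond : ∀ t : Finset (Fin k), (2 * t.card = 2 * m) ↔ t.card = m := by
      intro t; omega
    calc ∑ t ∈ (Finset.univ : Finset (Fin k)).powerset,
          (if 2 * t.card = 2 * m then ∏ i ∈ t, -(y i ^ 2) else 0)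
        = ∑ t ∈ (Finset.univ : Finset (Fin k)).powerset,
          (if t.card = m then ∏ i ∈ t, -(y i ^ 2) else 0) := by
          refine Finset.sum_congr rfl fun t _ => ?_
          simp [hcond t]
      _ = ∑ t ∈ Finset.powersetCard m (Finset.univ : Finset (Fin k)), ∏ i ∈ t, -(y i ^ 2) := by
          rw [Finset.powersetCard_eq_filter, Finset.sum_filter]
      _ = ∑ t ∈ Finset.powersetCard m (Finset.univ : Finset (Fin k)),
            (-1 : R) ^ m * ∏ i ∈ t, y i ^ 2 := by
          refine Finset.sum_congr rfl fun t ht => ?_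
          have hc : t.card = m := (Finset.mem_powersetCard.mp ht).2
          rw [← hc, show (∏ i ∈ t, -(y i ^ 2)) = ∏ i ∈ t, (-1 : R) * y i ^ 2 from
            Finset.prod_congr rfl fun i _ => (neg_one_mul _).symm,
            Finset.prod_mul_distrib, Finset.prod_const]
      _ = (-1 : R) ^ m * esymmVal (fun j => y j ^ 2) m := by
          rw [esymmVal, Finset.mul_sum]
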